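/- For single-machine scheduling with equal processing times p and release dates r_j, in any active schedule (one where no job can start earlier without violating release dates or machine availability), the completion time of every job equals r_i + l·p for some job index i and some integer l with 1 ≤ l ≤ n. -/
import Mathlib


/-- Feasibility of a single-machine schedule with common processing time `p`
and release dates `r`: every job starts no earlier than its release date, and
the processing intervals of distinct jobs are pairwise disjoint. -/
def FeasibleSched {n : ℕ} (r : Fin n → ℝ) (p : ℝ) (S : Fin n → ℝ) : Prop :=
  (∀ j, r j ≤ S j) ∧ ∀ i j, i ≠ j → (S i + p ≤ S j ∨ S j + p ≤ S i)

/-- A schedule is active if no single job can start strictly earlier, keeping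
all other start times fixed, while preserving feasibility. -/
def ActiveSched {n : ℕ} (r : Fin n → ℝ) (p : ℝ) (S : Fin n → ℝ) : Prop :=
  FeasibleSched r p S ∧
    ∀ j t, t < S j → ¬ FeasibleSched r p (Function.update S j t)

lemma active_step {n : ℕ} (r : Fin n → ℝ) (p : ℝ) (S : Fin n → ℝ)
    (hact : ActiveSched r p S) (j : Fin n) :
    S j = r j ∨ ∃ k, k ≠ j ∧ S j = S k + p := by
  by_contra h
  push_neg at h
  obtain ⟨h1, h2⟩ := h
  obtain ⟨⟨hrel, hdisj⟩, hactive⟩ := hact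
  have hrj : r j < S j := lt_of_le_of_ne (hrel j) (fun e => h1 e.symm)
  set T : Finset ℝ :=
    insert (r j) ((Finset.univ.filter (fun k => k ≠ j ∧ S k + p ≤ S j)).image
      (fun k => S k + p)) with hT
  have hTne : T.Nonempty := ⟨r j, Finset.mem_insert_self _ _⟩
  set t := T.max' hTne with ht
  have htmem := T.max'_mem hTne
  have htlt : t < S j := by
    rcases Finset.mem_insert.1 htmem with h | h
    · rw [ht, h]; exact hrj
    · obtain ⟨k, hk, hke⟩ := Finset.mem_image.1 h
      obtain ⟨hkj, hkle⟩ := (Finset.mem_filter.1 hk).2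
      rw [ht, ← hke]
      exact lt_of_le_of_ne hkle (h2 k hkj).symm
  refine hactive j t htlt ⟨?_, ?_⟩
  · intro i
    by_cases hij : i = j
    · subst hij
      rw [Function.update_self]
      exact Finset.le_max' T _ (Finset.mem_insert_self _ _)
    · rw [Function.update_of_ne hij]; exact hrel i
  · intro a b hab
    by_cases haj : a = j
    · subst haj
      rw [Function.update_self, Function.update_of_ne (Ne.symm hab)]
      rcases hdisj a b hab with h | h
      · exact Or.inl (by linarith)
      · refine Or.inr ?_
        have : S b + p ≤ t := Finset.le_max' T _ (Finset.mem_insert_of_mem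
          (Finset.mem_image.2 ⟨b, Finset.mem_filter.2 ⟨Finset.mem_univ _,
            Ne.symm hab, h⟩, rfl⟩))
        linarith
    · rw [Function.update_of_ne haj]
      by_cases hbj : b = j
      · subst hbj
        rw [Function.update_self]
        rcases hdisj a b hab with h | h
        · refine Or.inl ?_
          have : S a + p ≤ t := Finset.le_max' T _ (Finset.mem_insert_of_mem
            (Finset.mem_image.2 ⟨a, Finset.mem_filter.2 ⟨Finset.mem_univ _,
              hab, h⟩, rfl⟩))
          linarith
        · exact Or.inr (by linarith)
      · rw [Function.update_of_ne hbj]; exact hdisj a b hab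

/-- In any active schedule, the completion time `S j + p` of every job equals
`r i + l·p` for some job `i` and some integer `1 ≤ l ≤ n`. -/
theorem active_schedule_completion_times {n : ℕ} (r : Fin n → ℝ) (p : ℝ)
    (hp : 0 < p) (hr : ∀ j, 0 ≤ r j) (S : Fin n → ℝ)
    (hact : ActiveSched r p S) :
    ∀ j : Fin n, ∃ (i : Fin n) (l : ℕ), 1 ≤ l ∧ l ≤ n ∧
      S j + p = r i + (l : ℝ) * p := by
  have key := active_step r p S hact
  have main : ∀ m : ℕ, ∀ j : Fin n,
      (Finset.univ.filter (fun k => S k < S j)).card ≤ m →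
      ∃ i l, 1 ≤ l ∧ l ≤ (Finset.univ.filter (fun k => S k < S j)).card + 1 ∧
        S j + p = r i + (l : ℝ) * p := by
    intro m
    induction m with
    | zero =>
      intro j hj
      rcases key j with h | ⟨k, hkj, hke⟩
      · exact ⟨j, 1, le_refl 1, by omega, by rw [h]; push_cast; ring⟩
      · exfalso
        have hk : k ∈ Finset.univ.filter (fun k' => S k' < S j) :=
          Finset.mem_filter.2 ⟨Finset.mem_univ _, by
            have := hact.1.2 j k (Ne.symm hkj); nlinarith [hact.1.1 k, hr k]⟩
        have := Finset.card_pos.2 ⟨k, hk⟩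
        omega
    | succ m ih =>
      intro j hj
      rcases key j with h | ⟨k, hkj, hke⟩
      · exact ⟨j, 1, le_refl 1, by omega, by rw [h]; push_cast; ring⟩
      · have hklt : S k < S j := by nlinarith
        have hsub : (Finset.univ.filter (fun k' => S k' < S k)) ⊂
            (Finset.univ.filter (fun k' => S k' < S j)) := by
          refine Finset.ssubset_iff_of_subset ?_ |>.2 ?_
          · intro x hx
            simp only [Finset.mem_filter, Finset.mem_univ, true_and] at hx ⊢
            linarith
          · exact ⟨k, Finset.mem_filter.2 ⟨Finset.mem_univ _, hklt⟩,
              fun h => absurd (Finset.mem_filter.1 h).2 (lt_irrefl _)⟩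
        have hcard := Finset.card_lt_card hsub
        obtain ⟨i, l, hl1, hl2, hle⟩ := ih k (by omega)
        exact ⟨i, l + 1, by omega, by omega, by
          rw [hke]; push_cast; linarith⟩
  intro j
  have hjn : j ∉ Finset.univ.filter (fun k => S k < S j) := by
    simp
  have hcard : (Finset.univ.filter (fun k => S k < S j)).card < n := by
    have hne : Finset.univ.filter (fun k => S k < S j) ≠ Finset.univ := by
      intro h
      rw [h] at hjn
      exact hjn (Finset.mem_univ j)
    have := Finset.card_lt_card (Finset.ssubset_univ_iff.2 hne)
    simpa using this
  obtain ⟨i, l, hl1, hl2, hle⟩ := main _ j (le_refl _)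
  exact ⟨i, l, hl1, by omega, hle⟩
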